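/- Let n ≥ 1 and let x_1, …, x_n ∈ (0,∞) with empirical distribution function 𝔽(r) := (1/n)·#{i : x_i ≤ r}. Let 𝒦 denote the set of all functions h : [0,∞) → ℝ that are convex on [0,∞) and Lebesgue integrable over [0,∞). Suppose f̂ ∈ 𝒦 satisfies f̂(x_i) > 0 for all i and maximizes Ψ(h) := (1/n)·∑_{i=1}^n log h(x_i) − ∫_0^∞ h(x) dx over all h ∈ 𝒦 with h(x_i) > 0 for all i. Suppose moreover there are points 0 = t_0 < t_1 < … < t_m with t_m > max_i x_i such that f̂ is affine on each interval [t_{k−1}, t_k], f̂ = 0 on [t_m, ∞), and at each t_k (1 ≤ k ≤ m) the right derivative of f̂ is strictly larger than the left derivative. Let F̂(r) := ∫_0^r f̂(x) dx. Then 𝔽(t_k) = F̂(t_k) for k = 0, 1, …, m. -/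

import Mathlib

open MeasureTheory Set

private lemma convexOn_congr' {s : Set ℝ} {f g : ℝ → ℝ} (h : ConvexOn ℝ s f)
    (e : ∀ y, f y = g y) : ConvexOn ℝ s g := (funext e : f = g) ▸ h

private lemma convexOn_congrOn {s : Set ℝ} {f g : ℝ → ℝ} (h : ConvexOn ℝ s f)
    (e : ∀ y ∈ s, f y = g y) : ConvexOn ℝ s g := by
  refine ⟨h.1, fun a ha b hb u v hu hv huv => ?_⟩
  rw [← e a ha, ← e b hb, ← e _ (h.1 ha hb hu hv huv)]
  exact h.2 ha hb hu hv huv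

private lemma convexOn_affine' (f : ℝ → ℝ) (p q : ℝ) (hf : ∀ y, f y = p * y + q) :
    ConvexOn ℝ (Ici (0:ℝ)) f := by
  refine convexOn_congr' ?_ (fun y => (hf y).symm)
  refine ⟨convex_Ici 0, fun a _ b _ u v hu hv huv => le_of_eq ?_⟩
  simp only [smul_eq_mul]
  have hq : u * q + v * q = q := by rw [← add_mul, huv, one_mul]
  ring_nf
  linarith [hq]

private lemma loglb {z : ℝ} (hz : -(1/2) ≤ z) : z - 2 * z ^ 2 ≤ Real.log (1 + z) := by
  have h1 : (0:ℝ) < 1 + z := by linarith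
  have h2 : Real.log (1 + z)⁻¹ ≤ (1 + z)⁻¹ - 1 := Real.log_le_sub_one_of_pos (by positivity)
  rw [Real.log_inv] at h2
  have h3 : 1 - (1 + z)⁻¹ ≤ Real.log (1 + z) := by linarith
  have h4 : (1:ℝ)/(1+z) ≤ 1 - z + 2*z^2 := by
    rw [div_le_iff₀ h1]; nlinarith
  rw [inv_eq_one_div] at h3
  linarith

private lemma first_order
    (n : ℕ) (hn : 1 ≤ n) (x : Fin n → ℝ)
    (fhat : ℝ → ℝ) (hfint : IntegrableOn fhat (Ici 0))
    (hfpos : ∀ i, 0 < fhat (x i))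
    (hopt : ∀ h : ℝ → ℝ, ConvexOn ℝ (Ici 0) h → IntegrableOn h (Ici 0) →
      (∀ i, 0 < h (x i)) →
      (n : ℝ)⁻¹ * ∑ i, Real.log (h (x i)) - ∫ y in Ici (0 : ℝ), h y ≤
        (n : ℝ)⁻¹ * ∑ i, Real.log (fhat (x i)) - ∫ y in Ici (0 : ℝ), fhat y)
    (w : ℝ → ℝ) (hwint : IntegrableOn w (Ici 0))
    (ε₀ : ℝ) (hε₀ : 0 < ε₀)
    (hcv : ∀ ε : ℝ, 0 < ε → ε ≤ ε₀ → ConvexOn ℝ (Ici 0) (fun y => fhat y + ε * w y)) :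
    (n : ℝ)⁻¹ * ∑ i, (w (x i) / fhat (x i)) ≤ ∫ y in Ici (0:ℝ), w y := by
  have hn0 : (0:ℝ) < (n:ℝ) := by exact_mod_cast hn
  set u : Fin n → ℝ := fun i => w (x i) / fhat (x i) with hu
  set M : ℝ := 1 + ∑ i, |u i| with hM
  have hMpos : 0 < M := by
    have : (0:ℝ) ≤ ∑ i, |u i| := Finset.sum_nonneg fun i _ => abs_nonneg _
    linarith
  have hMabs : ∀ i, |u i| ≤ M := by
    intro i
    have h1 : |u i| ≤ ∑ j, |u j| :=
      Finset.single_le_sum (fun j _ => abs_nonneg (u j)) (Finset.mem_univ i)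
    linarith
  set C : ℝ := ∑ i, (u i) ^ 2 with hC
  have hCpos : 0 ≤ C := Finset.sum_nonneg fun i _ => sq_nonneg _
  have main : ∀ ε : ℝ, 0 < ε → ε ≤ ε₀ → ε ≤ 1 / (2 * M) →
      (n:ℝ)⁻¹ * ∑ i, u i ≤ (∫ y in Ici (0:ℝ), w y) + ε * (2 * (n:ℝ)⁻¹ * C) := by
    intro ε hε hεa hεb
    have hzabs : ∀ i, |ε * u i| ≤ 1/2 := by
      intro i
      rw [abs_mul, abs_of_pos hε]
      calc ε * |u i| ≤ (1/(2*M)) * M :=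
            mul_le_mul hεb (hMabs i) (abs_nonneg _) (by positivity)
        _ = 1/2 := by
            rw [div_mul_eq_mul_div, one_mul, mul_comm 2 M, ← div_div, div_self hMpos.ne']
    have hfactor : ∀ i, fhat (x i) + ε * w (x i) = fhat (x i) * (1 + ε * u i) := by
      intro i
      have := (hfpos i).ne'
      have hc : fhat (x i) * (w (x i) / fhat (x i)) = w (x i) := by field_simp
      simp only [hu]
      linear_combination (-ε) * hc
    have hpos : ∀ i, 0 < fhat (x i) + ε * w (x i) := by
      intro i
      rw [hfactor i]
      have := abs_le.mp (hzabs i)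
      have h1 : (0:ℝ) < 1 + ε * u i := by linarith [this.1]
      exact mul_pos (hfpos i) h1
    have hwε : IntegrableOn (fun y => ε * w y) (Ici (0:ℝ)) := hwint.const_mul ε
    have hint : IntegrableOn (fun y => fhat y + ε * w y) (Ici (0:ℝ)) := hfint.add hwε
    have hO := hopt (fun y => fhat y + ε * w y) (hcv ε hε hεa) hint hpos
    have hIadd : (∫ y in Ici (0:ℝ), (fhat y + ε * w y)) =
        (∫ y in Ici (0:ℝ), fhat y) + ε * ∫ y in Ici (0:ℝ), w y := by
      rw [integral_add hfint hwε, integral_const_mul]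
    rw [hIadd] at hO
    have hlogsum : ∀ i, Real.log (fhat (x i) + ε * w (x i)) =
        Real.log (fhat (x i)) + Real.log (1 + ε * u i) := by
      intro i
      have h1 : (0:ℝ) < 1 + ε * u i := by linarith [(abs_le.mp (hzabs i)).1]
      rw [hfactor i, Real.log_mul (hfpos i).ne' h1.ne']
    have hsum : (n:ℝ)⁻¹ * ∑ i, Real.log (1 + ε * u i) ≤ ε * ∫ y in Ici (0:ℝ), w y := by
      have e1 : ∑ i, Real.log (fhat (x i) + ε * w (x i)) =
          (∑ i, Real.log (fhat (x i))) + ∑ i, Real.log (1 + ε * u i) := by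
        rw [← Finset.sum_add_distrib]
        exact Finset.sum_congr rfl fun i _ => hlogsum i
      rw [e1] at hO
      nlinarith [hO]
    have hterm : ∀ i, ε * u i - 2 * (ε * u i)^2 ≤ Real.log (1 + ε * u i) := by
      intro i
      have := abs_le.mp (hzabs i)
      have : -(1/2) ≤ ε * u i := by linarith [this.1]
      exact loglb this
    have hsum2 : (∑ i, (ε * u i - 2 * (ε * u i)^2)) ≤ ∑ i, Real.log (1 + ε * u i) :=
      Finset.sum_le_sum fun i _ => hterm i
    have hexp : (∑ i, (ε * u i - 2 * (ε * u i)^2)) = ε * (∑ i, u i) - 2 * ε^2 * C := by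
      rw [Finset.sum_sub_distrib, Finset.mul_sum]
      congr 1
      rw [hC, Finset.mul_sum]
      exact Finset.sum_congr rfl fun i _ => by ring
    -- combine
    have step : (n:ℝ)⁻¹ * (ε * (∑ i, u i) - 2 * ε^2 * C) ≤ ε * ∫ y in Ici (0:ℝ), w y := by
      calc (n:ℝ)⁻¹ * (ε * (∑ i, u i) - 2 * ε^2 * C)
          = (n:ℝ)⁻¹ * ∑ i, (ε * u i - 2 * (ε * u i)^2) := by rw [hexp]
        _ ≤ (n:ℝ)⁻¹ * ∑ i, Real.log (1 + ε * u i) := by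
            apply mul_le_mul_of_nonneg_left hsum2 (by positivity)
        _ ≤ ε * ∫ y in Ici (0:ℝ), w y := hsum
    have hninv : (0:ℝ) < (n:ℝ)⁻¹ := by positivity
    nlinarith [step, hε, sq_nonneg ε]
  -- conclude
  refine le_of_forall_pos_le_add ?_
  intro η hη
  set D : ℝ := 2 * (n:ℝ)⁻¹ * C with hD
  have hDpos : 0 ≤ D := by positivity
  set ε : ℝ := min (min ε₀ (1/(2*M))) (η/(D+1)) with hε
  have hεpos : 0 < ε := by
    apply lt_min (lt_min hε₀ (by positivity)) (by positivity)
  have h1 := main ε hεpos (le_trans (min_le_left _ _) (min_le_left _ _))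
    (le_trans (min_le_left _ _) (min_le_right _ _))
  have h2 : ε * D ≤ η := by
    have hεle : ε ≤ η/(D+1) := min_le_right _ _
    have : ε * D ≤ (η/(D+1)) * D := mul_le_mul_of_nonneg_right hεle hDpos
    calc ε * D ≤ (η/(D+1)) * D := this
      _ ≤ η := by rw [div_mul_eq_mul_div, div_le_iff₀ (by linarith)]; nlinarith
  linarith [h1, h2]

private lemma convexOn_glue {g₁ g₂ : ℝ → ℝ} {c : ℝ} (hc : 0 ≤ c)
    (h₁ : ConvexOn ℝ (Ici (0:ℝ)) g₁) (h₂ : ConvexOn ℝ (Ici (0:ℝ)) g₂)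
    (heq : g₁ c = g₂ c)
    (hcross : ∀ p q : ℝ, 0 ≤ p → p < c → c < q →
      (g₁ c - g₁ p) / (c - p) ≤ (g₂ q - g₂ c) / (q - c)) :
    ConvexOn ℝ (Ici (0:ℝ)) (fun y => if y ≤ c then g₁ y else g₂ y) := by
  refine convexOn_of_slope_mono_adjacent (convex_Ici 0) ?_
  intro x y z hx hz hxy hyz
  have hx0 : (0:ℝ) ≤ x := hx
  have hz0 : (0:ℝ) ≤ z := hz
  have hy0 : (0:ℝ) ≤ y := le_of_lt (lt_of_le_of_lt hx0 hxy)
  have hy : y ∈ Ici (0:ℝ) := hy0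
  have hcmem : c ∈ Ici (0:ℝ) := hc
  by_cases hzc : z ≤ c
  · have hyc : y ≤ c := le_of_lt (lt_of_lt_of_le hyz hzc)
    have hxc : x ≤ c := le_of_lt (lt_of_lt_of_le hxy hyc)
    simp only [hxc, hyc, hzc, if_pos]
    exact h₁.slope_mono_adjacent hx hz hxy hyz
  · push_neg at hzc
    by_cases hxc : x ≤ c
    · by_cases hyc : y ≤ c
      · simp only [hxc, hyc, if_pos, if_neg (not_le.mpr hzc)]
        rcases eq_or_lt_of_le hyc with hyc' | hyc'
        · subst hyc'
          have H := hcross x z hx0 hxy hzc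
          rw [heq] at H ⊢
          exact H
        · have A1 : (g₁ y - g₁ x) / (y - x) ≤ (g₁ c - g₁ y) / (c - y) :=
            h₁.slope_mono_adjacent hx hcmem hxy hyc'
          have A2 : (g₁ c - g₁ y) / (c - y) ≤ (g₂ z - g₂ c) / (z - c) :=
            hcross y z hy0 hyc' hzc
          have d1 : (0:ℝ) < y - x := by linarith
          have d2 : (0:ℝ) < c - y := by linarith
          have d3 : (0:ℝ) < z - c := by linarith
          have d4 : (0:ℝ) < z - y := by linarith
          rw [div_le_div_iff₀ d1 d2] at A1
          rw [div_le_div_iff₀ d2 d3] at A2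
          rw [div_le_div_iff₀ d1 d4]
          rw [← heq] at A2
          have T1 := mul_le_mul_of_nonneg_right A1 d3.le
          have T2 := mul_le_mul_of_nonneg_right A2 d1.le
          have T3 := mul_le_mul_of_nonneg_right A1 d2.le
          have key : (g₁ y - g₁ x) * (z - y) * (c - y) ≤ (g₂ z - g₁ y) * (y - x) * (c - y) := by
            nlinarith [T1, T2, T3]
          exact le_of_mul_le_mul_right key d2
      · push_neg at hyc
        simp only [hxc, if_pos, if_neg (not_le.mpr hyc), if_neg (not_le.mpr hzc)]
        rcases eq_or_lt_of_le hxc with hxc' | hxc'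
        · subst hxc'
          rw [heq]
          exact h₂.slope_mono_adjacent hcmem hz hyc hyz
        · have B1 : (g₂ y - g₂ c) / (y - c) ≤ (g₂ z - g₂ y) / (z - y) :=
            h₂.slope_mono_adjacent hcmem hz hyc hyz
          have B2 : (g₁ c - g₁ x) / (c - x) ≤ (g₂ y - g₂ c) / (y - c) :=
            hcross x y hx0 hxc' hyc
          have d1 : (0:ℝ) < c - x := by linarith
          have d2 : (0:ℝ) < y - c := by linarith
          have d3 : (0:ℝ) < z - y := by linarith
          have d4 : (0:ℝ) < y - x := by linarith
          rw [div_le_div_iff₀ d2 d3] at B1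
          rw [div_le_div_iff₀ d1 d2] at B2
          rw [div_le_div_iff₀ d4 d3]
          rw [← heq] at B1 B2
          have U1 := mul_le_mul_of_nonneg_right B1 d2.le
          have U2 := mul_le_mul_of_nonneg_right B2 d3.le
          have U3 := mul_le_mul_of_nonneg_right B1 d1.le
          have key : (g₂ y - g₁ x) * (z - y) * (y - c) ≤ (g₂ z - g₂ y) * (y - x) * (y - c) := by
            nlinarith [U1, U2, U3, heq]
          exact le_of_mul_le_mul_right key d2
    · push_neg at hxc
      have hyc : ¬ y ≤ c := not_le.mpr (lt_trans hxc hxy)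
      simp only [if_neg (not_le.mpr hxc), hyc, if_neg (not_le.mpr hzc), if_false]
      exact h₂.slope_mono_adjacent (mem_Ici.mpr (le_of_lt (lt_of_le_of_lt hc hxc))) hz hxy hyz

/-- For a convex function affine with slope `α` on `[a,τ]`, every secant ending at `τ`
from the left has slope at most `α`. -/
private lemma secant_le {g : ℝ → ℝ} (hg : ConvexOn ℝ (Ici (0:ℝ)) g) {a τ α β : ℝ}
    (ha : 0 ≤ a) (haτ : a < τ) (haff : ∀ y ∈ Icc a τ, g y = α * y + β) :
    ∀ x, 0 ≤ x → x < τ → (g τ - g x) / (τ - x) ≤ α := by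
  intro x hx hxτ
  have hgτ : g τ = α * τ + β := haff τ ⟨haτ.le, le_refl _⟩
  by_cases hax : a ≤ x
  · rw [hgτ, haff x ⟨hax, hxτ.le⟩, div_le_iff₀ (by linarith)]
    ring_nf
    nlinarith
  · push_neg at hax
    have hga : g a = α * a + β := haff a ⟨le_refl _, haτ.le⟩
    have A : (g a - g x) / (a - x) ≤ (g τ - g a) / (τ - a) :=
      hg.slope_mono_adjacent (mem_Ici.mpr hx) (mem_Ici.mpr (by linarith)) hax haτ
    have hslope : (g τ - g a) / (τ - a) = α := by
      rw [hgτ, hga, div_eq_iff (by linarith : τ - a ≠ 0)]; ring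
    rw [hslope] at A
    rw [div_le_iff₀ (by linarith)] at A ⊢
    nlinarith [A]

/-- For a convex function affine with slope `α` on `[τ,b]`, every secant starting at `τ`
to the right has slope at least `α`. -/
private lemma secant_ge {g : ℝ → ℝ} (hg : ConvexOn ℝ (Ici (0:ℝ)) g) {τ b α β : ℝ}
    (hτ : 0 ≤ τ) (hτb : τ < b) (haff : ∀ y ∈ Icc τ b, g y = α * y + β) :
    ∀ z, τ < z → α ≤ (g z - g τ) / (z - τ) := by
  intro z hz
  have hgτ : g τ = α * τ + β := haff τ ⟨le_refl _, hτb.le⟩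
  by_cases hzb : z ≤ b
  · rw [hgτ, haff z ⟨hz.le, hzb⟩, le_div_iff₀ (by linarith)]
    nlinarith
  · push_neg at hzb
    have hgb : g b = α * b + β := haff b ⟨hτb.le, le_refl _⟩
    have A : (g b - g τ) / (b - τ) ≤ (g z - g b) / (z - b) :=
      hg.slope_mono_adjacent (mem_Ici.mpr hτ) (mem_Ici.mpr (by linarith)) hτb hzb
    have hslope : (g b - g τ) / (b - τ) = α := by
      rw [hgτ, hgb, div_eq_iff (by linarith : b - τ ≠ 0)]; ring
    rw [hslope] at A
    rw [le_div_iff₀ (by linarith)] at A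
    rw [le_div_iff₀ (by linarith)]
    nlinarith [A]

private lemma derivWithin_affine_left {f : ℝ → ℝ} {a c p q : ℝ} (hac : a < c)
    (haff : ∀ y ∈ Icc a c, f y = p * y + q) : derivWithin f (Iic c) c = p := by
  have hmem : Ioi a ∩ Iic c ∈ nhdsWithin c (Iic c) :=
    Filter.inter_mem (mem_nhdsWithin_of_mem_nhds (Ioi_mem_nhds hac)) self_mem_nhdsWithin
  have hev : f =ᶠ[nhdsWithin c (Iic c)] (fun y => p * y + q) := by
    filter_upwards [hmem] with y hy
    exact haff y ⟨hy.1.le, hy.2⟩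
  rw [hev.derivWithin_eq (haff c ⟨hac.le, le_rfl⟩)]
  have hd : HasDerivAt (fun y : ℝ => p * y + q) p c := by
    simpa using ((hasDerivAt_id c).const_mul p).add_const q
  exact hd.hasDerivWithinAt.derivWithin (uniqueDiffOn_Iic c c (mem_Iic.mpr le_rfl))

private lemma derivWithin_affine_right {f : ℝ → ℝ} {c b p q : ℝ} (hcb : c < b)
    (haff : ∀ y ∈ Icc c b, f y = p * y + q) : derivWithin f (Ici c) c = p := by
  have hmem : Iio b ∩ Ici c ∈ nhdsWithin c (Ici c) :=
    Filter.inter_mem (mem_nhdsWithin_of_mem_nhds (Iio_mem_nhds hcb)) self_mem_nhdsWithin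
  have hev : f =ᶠ[nhdsWithin c (Ici c)] (fun y => p * y + q) := by
    filter_upwards [hmem] with y hy
    exact haff y ⟨hy.2, hy.1.le⟩
  rw [hev.derivWithin_eq (haff c ⟨le_rfl, hcb.le⟩)]
  have hd : HasDerivAt (fun y : ℝ => p * y + q) p c := by
    simpa using ((hasDerivAt_id c).const_mul p).add_const q
  exact hd.hasDerivWithinAt.derivWithin (uniqueDiffOn_Ici c c (mem_Ici.mpr le_rfl))

private lemma derivWithin_zero_tail {f : ℝ → ℝ} {c : ℝ} (h : ∀ y, c ≤ y → f y = 0) :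
    derivWithin f (Ici c) c = 0 := by
  have hev : f =ᶠ[nhdsWithin c (Ici c)] (fun _ => (0:ℝ)) := by
    filter_upwards [self_mem_nhdsWithin] with y hy
    exact h y hy
  rw [hev.derivWithin_eq (h c le_rfl)]
  exact (hasDerivAt_const c (0:ℝ)).hasDerivWithinAt.derivWithin
    (uniqueDiffOn_Ici c c (mem_Ici.mpr le_rfl))

set_option maxHeartbeats 1000000 in
theorem mle_equals_edf_at_knots
    (n : ℕ) (hn : 1 ≤ n) (x : Fin n → ℝ) (hx : ∀ i, 0 < x i)
    (EDF : ℝ → ℝ)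
    (hEDF : ∀ r : ℝ, EDF r = (n : ℝ)⁻¹ * (Finset.univ.filter fun i => x i ≤ r).card)
    (fhat : ℝ → ℝ)
    (hfconv : ConvexOn ℝ (Ici 0) fhat) (hfint : IntegrableOn fhat (Ici 0))
    (hfpos : ∀ i, 0 < fhat (x i))
    (hopt : ∀ h : ℝ → ℝ, ConvexOn ℝ (Ici 0) h → IntegrableOn h (Ici 0) →
      (∀ i, 0 < h (x i)) →
      (n : ℝ)⁻¹ * ∑ i, Real.log (h (x i)) - ∫ y in Ici (0 : ℝ), h y ≤
        (n : ℝ)⁻¹ * ∑ i, Real.log (fhat (x i)) - ∫ y in Ici (0 : ℝ), fhat y)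
    (m : ℕ) (t : ℕ → ℝ)
    (ht0 : t 0 = 0) (htlt : ∀ k, k < m → t k < t (k + 1))
    (htmax : ∀ i, x i < t m)
    (haff : ∀ k, 1 ≤ k → k ≤ m → ∃ α β : ℝ,
      ∀ y ∈ Icc (t (k - 1)) (t k), fhat y = α * y + β)
    (htail : ∀ y, t m ≤ y → fhat y = 0)
    (hkink : ∀ k, 1 ≤ k → k ≤ m →
      derivWithin fhat (Iic (t k)) (t k) < derivWithin fhat (Ici (t k)) (t k)) :
    ∀ k ≤ m, EDF (t k) = ∫ u in (0 : ℝ)..(t k), fhat u := by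
  have hn0 : (0:ℝ) < (n:ℝ) := by exact_mod_cast hn
  -- m ≥ 1
  have hm1 : 1 ≤ m := by
    by_contra h
    push_neg at h
    interval_cases m
    exact absurd (htmax ⟨0, hn⟩) (not_lt.mpr (ht0 ▸ (hx ⟨0, hn⟩).le))
  -- t is strictly monotone up to m
  have tlt : ∀ {j k : ℕ}, j < k → k ≤ m → t j < t k := by
    intro j k hjk hkm
    induction k with
    | zero => omega
    | succ K ih =>
      rcases Nat.lt_succ_iff_lt_or_eq.mp hjk with h | h
      · exact (ih h (by omega)).trans (htlt K (by omega))
      · exact h ▸ htlt K (by omega)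
  have tle : ∀ {j k : ℕ}, j ≤ k → k ≤ m → t j ≤ t k := by
    intro j k hjk hkm
    rcases eq_or_lt_of_le hjk with h | h
    · exact le_of_eq (by rw [h])
    · exact (tlt h hkm).le
  have htpos : ∀ k, 1 ≤ k → k ≤ m → 0 < t k := fun k h1 h2 => ht0 ▸ tlt (by omega) h2
  have htnn : ∀ k, k ≤ m → 0 ≤ t k := by
    intro k hk
    rcases Nat.eq_zero_or_pos k with h | h
    · rw [h, ht0]
    · exact (htpos k h hk).le
  -- choose slopes and intercepts
  have haff' : ∀ k : ℕ, ∃ p : ℝ × ℝ,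
      (1 ≤ k → k ≤ m → ∀ y ∈ Icc (t (k-1)) (t k), fhat y = p.1 * y + p.2) := by
    intro k
    by_cases h : 1 ≤ k ∧ k ≤ m
    · obtain ⟨a, b, hab⟩ := haff k h.1 h.2
      exact ⟨(a, b), fun _ _ => hab⟩
    · exact ⟨(0, 0), fun h1 h2 => absurd ⟨h1, h2⟩ h⟩
  choose P hP using haff'
  set α : ℕ → ℝ := fun k => (P k).1 with hα
  set β : ℕ → ℝ := fun k => (P k).2 with hβ
  have haffk : ∀ k, 1 ≤ k → k ≤ m → ∀ y ∈ Icc (t (k-1)) (t k), fhat y = α k * y + β k := hP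
  -- derivatives at knots
  have hαIic : ∀ k, 1 ≤ k → k ≤ m → derivWithin fhat (Iic (t k)) (t k) = α k := by
    intro k h1 h2
    exact derivWithin_affine_left (tlt (Nat.sub_lt (by omega) one_pos) h2) (haffk k h1 h2)
  have hαIci : ∀ k, 1 ≤ k → k < m → derivWithin fhat (Ici (t k)) (t k) = α (k+1) := by
    intro k h1 h2
    have h3 : ∀ y ∈ Icc (t k) (t (k+1)), fhat y = α (k+1) * y + β (k+1) := by
      simpa using haffk (k+1) (by omega) (by omega)
    exact derivWithin_affine_right (htlt k h2) h3
  have hαm : derivWithin fhat (Ici (t m)) (t m) = 0 := derivWithin_zero_tail htail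
  have hmono : ∀ k, 1 ≤ k → k < m → α k < α (k+1) := by
    intro k h1 h2
    have := hkink k h1 h2.le
    rwa [hαIic k h1 h2.le, hαIci k h1 h2] at this
  have hαmneg : α m < 0 := by
    have := hkink m hm1 le_rfl
    rwa [hαIic m hm1 le_rfl, hαm] at this
  have hαle : ∀ j k, 1 ≤ j → j ≤ k → k ≤ m → α j ≤ α k := by
    intro j k hj hjk hkm
    induction k with
    | zero => omega
    | succ K ih =>
      by_cases hjK : j ≤ K
      · exact (ih hjK (by omega)).trans (hmono K (by omega) (by omega)).le
      · have hje : j = K + 1 := by omega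
        exact le_of_eq (by rw [hje])
  have hαneg : ∀ k, 1 ≤ k → k ≤ m → α k < 0 :=
    fun k h1 h2 => lt_of_le_of_lt (hαle k m h1 h2 le_rfl) hαmneg
  -- values at knots
  have hfknotR : ∀ k, 1 ≤ k → k ≤ m → fhat (t k) = α k * t k + β k :=
    fun k h1 h2 => haffk k h1 h2 (t k) ⟨tle (by omega) h2, le_rfl⟩
  have hfknotL : ∀ k, 1 ≤ k → k ≤ m → fhat (t (k-1)) = α k * t (k-1) + β k :=
    fun k h1 h2 => haffk k h1 h2 (t (k-1)) ⟨le_rfl, tle (by omega) h2⟩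
  have hftm : fhat (t m) = 0 := htail (t m) le_rfl
  -- positivity at interior knots
  have hknotpos : ∀ k, k < m → 0 < fhat (t k) := by
    have H : ∀ d, d ≤ m → (1 ≤ d → 0 < fhat (t (m - d))) ∧ 0 ≤ fhat (t (m - d)) := by
      intro d
      induction d with
      | zero => exact fun _ => ⟨fun h => absurd h (by omega), by rw [Nat.sub_zero, hftm]⟩
      | succ D ih =>
        intro hDm
        have ihD := ih (by omega)
        have hj1 : m - (D+1) + 1 = m - D := by omega
        have h1 : 1 ≤ m - (D+1) + 1 := by omega
        have h2 : m - (D+1) + 1 ≤ m := by omega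
        have hL : fhat (t (m - (D+1))) = α (m-(D+1)+1) * t (m-(D+1)) + β (m-(D+1)+1) := by
          have := hfknotL (m-(D+1)+1) h1 h2
          simpa using this
        have hR : fhat (t (m-(D+1)+1)) = α (m-(D+1)+1) * t (m-(D+1)+1) + β (m-(D+1)+1) :=
          hfknotR (m-(D+1)+1) h1 h2
        have hαn : α (m-(D+1)+1) < 0 := hαneg _ h1 h2
        have htlt' : t (m-(D+1)) < t (m-(D+1)+1) := tlt (by omega) h2
        have hfR : 0 ≤ fhat (t (m-(D+1)+1)) := by rw [hj1]; exact ihD.2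
        have hpos : 0 < fhat (t (m - (D+1))) := by nlinarith [hL, hR, hαn, htlt', hfR]
        exact ⟨fun _ => hpos, hpos.le⟩
    intro k hk
    have h1 := (H (m - k) (by omega)).1 (by omega)
    have h2 : m - (m - k) = k := by omega
    rwa [h2] at h1
  -- secant lower bound by first slope
  have haff1 : ∀ y ∈ Icc (0:ℝ) (t 1), fhat y = α 1 * y + β 1 := by
    have h := haffk 1 le_rfl hm1
    simpa [ht0] using h
  have ht1pos : 0 < t 1 := htpos 1 le_rfl hm1
  have lowerLip : ∀ u v : ℝ, 0 ≤ u → u < v → α 1 * (v - u) ≤ fhat v - fhat u := by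
    intro u v hu huv
    rcases eq_or_lt_of_le hu with h0 | h0
    · have hv : (0:ℝ) < v := by rw [← h0] at huv; exact huv
      have A := secant_ge hfconv le_rfl ht1pos haff1 v hv
      rw [le_div_iff₀ (by linarith)] at A
      rw [← h0]
      linarith
    · have B := secant_ge hfconv le_rfl ht1pos haff1 u h0
      have C : (fhat u - fhat 0) / (u - 0) ≤ (fhat v - fhat u) / (v - u) :=
        hfconv.slope_mono_adjacent (mem_Ici.mpr le_rfl) (mem_Ici.mpr (by linarith)) h0 huv
      have D := B.trans C
      rw [le_div_iff₀ (by linarith)] at D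
      linarith
  -- integrability of fhat on subintervals
  have hfIoc : ∀ {a b : ℝ}, 0 ≤ a → IntegrableOn fhat (Ioc a b) :=
    fun {a b} ha => hfint.mono_set (fun y hy => le_trans ha hy.1.le)
  have hfIcc : ∀ {a b : ℝ}, 0 ≤ a → IntegrableOn fhat (Icc a b) :=
    fun {a b} ha => hfint.mono_set (fun y hy => le_trans ha hy.1)
  have hfII : ∀ a b : ℝ, 0 ≤ a → a ≤ b → IntervalIntegrable fhat volume a b := by
    intro a b ha hab
    rw [intervalIntegrable_iff, uIoc_of_le hab]
    exact hfIoc ha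
  have htm0 : 0 ≤ t m := htnn m le_rfl
  have hIci_eq : (∫ y in Ici (0:ℝ), fhat y) = ∫ u in (0:ℝ)..(t m), fhat u := by
    rw [intervalIntegral.integral_of_le htm0]
    rw [MeasureTheory.integral_Ici_eq_integral_Ioi]
    rw [← Ioc_union_Ioi_eq_Ioi htm0]
    rw [MeasureTheory.setIntegral_union (Ioc_disjoint_Ioi le_rfl) measurableSet_Ioi
      (hfIoc le_rfl) (hfint.mono_set (fun y hy => le_trans htm0 (le_of_lt hy)))]
    have hz : ∫ y in Ioi (t m), fhat y = 0 := by
      rw [MeasureTheory.setIntegral_congr_fun measurableSet_Ioi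
        (fun y hy => htail y (le_of_lt hy))]
      simp
    rw [hz, add_zero]
  -- total mass one
  have hifone : (∫ y in Ici (0:ℝ), fhat y) = 1 := by
    have hcv1 : ∀ ε : ℝ, 0 < ε → ε ≤ 1 → ConvexOn ℝ (Ici 0) (fun y => fhat y + ε * fhat y) := by
      intro ε hε _
      exact convexOn_congr' (hfconv.smul (by linarith : (0:ℝ) ≤ 1 + ε))
        (fun y => by simp only [smul_eq_mul]; ring)
    have h1 := first_order n hn x fhat hfint hfpos hopt fhat hfint 1 one_pos hcv1
    have hsum1 : ∑ i, (fhat (x i) / fhat (x i)) = (n:ℝ) := by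
      rw [Finset.sum_congr rfl (fun i _ => div_self (hfpos i).ne')]
      simp
    rw [hsum1, inv_mul_cancel₀ hn0.ne'] at h1
    have hcv2 : ∀ ε : ℝ, 0 < ε → ε ≤ 1/2 →
        ConvexOn ℝ (Ici 0) (fun y => fhat y + ε * (-(fhat y))) := by
      intro ε hε hε2
      exact convexOn_congr' (hfconv.smul (by linarith : (0:ℝ) ≤ 1 - ε))
        (fun y => by simp only [smul_eq_mul]; ring)
    have h2 := first_order n hn x fhat hfint hfpos hopt (fun y => -(fhat y)) hfint.neg
      (1/2) (by norm_num) hcv2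
    rw [integral_neg] at h2
    have hsum2 : ∑ i, (-(fhat (x i)) / fhat (x i)) = -(n:ℝ) := by
      rw [Finset.sum_congr rfl (fun i _ => by rw [neg_div, div_self (hfpos i).ne'])]
      simp
    rw [hsum2] at h2
    have he : (n:ℝ)⁻¹ * -(n:ℝ) = -1 := by field_simp
    rw [he] at h2
    linarith
  have middle : ∀ k, 1 ≤ k → k < m → EDF (t k) = ∫ u in (0:ℝ)..(t k), fhat u := by
    intro k hk1 hkm
    have hkm' : k ≤ m := hkm.le
    have hττ1 : t k < t (k+1) := htlt k hkm
    have hτ0τ : t (k-1) < t k := tlt (Nat.sub_lt (by omega) one_pos) hkm'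
    have hτpos : 0 < t k := htpos k hk1 hkm'
    have hτ0nn : 0 ≤ t (k-1) := htnn _ (by omega)
    have hfτpos : 0 < fhat (t k) := hknotpos k hkm
    have haffL : ∀ y ∈ Icc (t (k-1)) (t k), fhat y = α k * y + β k := haffk k hk1 hkm'
    have haffR : ∀ y ∈ Icc (t k) (t (k+1)), fhat y = α (k+1) * y + β (k+1) := by
      simpa using haffk (k+1) (by omega) (by omega)
    have hkk1 : α k < α (k+1) := hmono k hk1 hkm
    have hα1neg : α 1 < 0 := hαneg 1 le_rfl hm1
    have hαkneg : α k < 0 := hαneg k hk1 hkm'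
    have hfτk : fhat (t k) = α k * t k + β k := hfknotR k hk1 hkm'
    have hcard : ((Finset.univ.filter fun i => x i ≤ t k).card : ℝ) =
        ∑ i, (if x i ≤ t k then (1:ℝ) else 0) := by
      rw [Finset.card_filter, Nat.cast_sum]
      exact Finset.sum_congr rfl fun i _ => by split <;> simp
    have upper : ∀ δ : ℝ, 0 < δ → δ < t (k+1) - t k →
        (n:ℝ)⁻¹ * ∑ i, (if x i ≤ t k then (1:ℝ) else 0) ≤
          (∫ u in (0:ℝ)..(t k), fhat u) + δ * fhat (t k) / 2 := by
      intro δ hδ hδ1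
      set A : ℝ → ℝ := fun y => fhat (t k) / δ * (t k + δ - y) with hA
      set w : ℝ → ℝ := fun y => if y ≤ t k then fhat y else max (A y) 0 with hw
      have hwIcc : IntegrableOn w (Icc 0 (t k)) :=
        (hfIcc le_rfl).congr_fun (fun y hy => by simp [hw, hy.2]) measurableSet_Icc
      have hcontA : Continuous (fun y => max (A y) 0) :=
        (continuous_const.mul (continuous_const.sub continuous_id)).max continuous_const
      have hwIoc : IntegrableOn w (Ioc (t k) (t k + δ)) :=
        (hcontA.integrableOn_Icc.mono_set Ioc_subset_Icc_self).congr_fun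
          (fun y hy => by simp [hw, not_le.mpr hy.1]) measurableSet_Ioc
      have hwIoi : IntegrableOn w (Ioi (t k + δ)) := by
        refine (integrableOn_zero).congr_fun (fun y hy => ?_) measurableSet_Ioi
        have hy' : t k + δ < y := hy
        have h1 : ¬ y ≤ t k := by linarith
        have h2 : A y ≤ 0 := by
          rw [hA]
          exact mul_nonpos_of_nonneg_of_nonpos (div_nonneg hfτpos.le hδ.le) (by linarith)
        simp [hw, h1, max_eq_right h2]
      have hwint : IntegrableOn w (Ici 0) := by
        have hs : Ici (0:ℝ) = Icc 0 (t k) ∪ (Ioc (t k) (t k + δ) ∪ Ioi (t k + δ)) := by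
          rw [Ioc_union_Ioi_eq_Ioi (by linarith : t k ≤ t k + δ),
            Icc_union_Ioi_eq_Ici hτpos.le]
        rw [hs]
        exact hwIcc.union (hwIoc.union hwIoi)
      set S : ℝ := α k + fhat (t k) / δ with hS
      set ε₀ : ℝ := (α (k+1) - α k) / (1 + |S|) with hε₀
      have hε₀pos : 0 < ε₀ := div_pos (by linarith) (by positivity)
      have hcv : ∀ ε, 0 < ε → ε ≤ ε₀ → ConvexOn ℝ (Ici 0) (fun y => fhat y + ε * w y) := by
        intro ε hε hεle
        have hslopes : (1 + ε) * α k ≤ α (k+1) - ε * (fhat (t k) / δ) := by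
          have h1 : ε * S ≤ ε * |S| := mul_le_mul_of_nonneg_left (le_abs_self _) hε.le
          have h2 : ε * |S| ≤ ε₀ * |S| := mul_le_mul_of_nonneg_right hεle (abs_nonneg _)
          have h3 : ε₀ * |S| ≤ α (k+1) - α k := by
            rw [hε₀, div_mul_eq_mul_div, div_le_iff₀ (by positivity)]
            have h4 : (α (k+1) - α k) * |S| ≤ (α (k+1) - α k) * (1 + |S|) :=
              mul_le_mul_of_nonneg_left (by linarith only [abs_nonneg S])
                (by linarith only [hkk1])
            linarith only [h4]
          have h5 : ε * S ≤ α (k+1) - α k := by linarith only [h1, h2, h3]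
          rw [hS] at h5
          linarith only [h5]
        set g₁ : ℝ → ℝ := fun y => fhat y + ε * fhat y with hg₁def
        set g₂ : ℝ → ℝ := fun y => max (fhat y + ε * A y) (fhat y) with hg₂def
        have hg₁ : ConvexOn ℝ (Ici 0) g₁ :=
          convexOn_congr' (hfconv.smul (by linarith : (0:ℝ) ≤ 1 + ε))
            (fun y => by simp only [smul_eq_mul]; ring)
        have haffA : ConvexOn ℝ (Ici 0) (fun y => ε * A y) :=
          convexOn_affine' _ (-(ε * fhat (t k) / δ)) (ε * fhat (t k) / δ * (t k + δ))
            (fun y => by rw [hA]; ring)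
        have hg₂ : ConvexOn ℝ (Ici 0) g₂ := by
          refine convexOn_congr' ((hfconv.add haffA).sup hfconv) (fun y => ?_)
          simp [Pi.sup_apply, hg₂def]
        have heqτ : g₁ (t k) = g₂ (t k) := by
          have hAτ : A (t k) = fhat (t k) := by rw [hA]; field_simp; ring
          rw [hg₁def, hg₂def]
          simp only [hAτ]
          rw [max_eq_left (by nlinarith : fhat (t k) ≤ fhat (t k) + ε * fhat (t k))]
        have hcross : ∀ p q : ℝ, 0 ≤ p → p < t k → t k < q →
            (g₁ (t k) - g₁ p) / (t k - p) ≤ (g₂ q - g₂ (t k)) / (q - t k) := by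
          intro p q hp hpτ hτq
          have haffg₁ : ∀ y ∈ Icc (t (k-1)) (t k), g₁ y = ((1+ε) * α k) * y + (1+ε) * β k := by
            intro y hy
            rw [hg₁def]; simp only; rw [haffL y hy]; ring
          have L := secant_le hg₁ hτ0nn hτ0τ haffg₁ p hp hpτ
          have haffg₂ : ∀ y ∈ Icc (t k) (t k + δ),
              g₂ y = (α (k+1) - ε * (fhat (t k) / δ)) * y
                + (β (k+1) + ε * (fhat (t k) / δ) * (t k + δ)) := by
            intro y hy
            have hy1 : y ∈ Icc (t k) (t (k+1)) := ⟨hy.1, by linarith [hy.2]⟩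
            have hfy : fhat y = α (k+1) * y + β (k+1) := haffR y hy1
            have hA0 : 0 ≤ ε * A y := by
              apply mul_nonneg hε.le
              rw [hA]
              exact mul_nonneg (div_nonneg hfτpos.le hδ.le) (by linarith [hy.2])
            rw [hg₂def]
            simp only
            rw [max_eq_left (by linarith : fhat y ≤ fhat y + ε * A y), hfy, hA]
            ring
          have R := secant_ge hg₂ hτpos.le (by linarith : t k < t k + δ) haffg₂ q hτq
          calc (g₁ (t k) - g₁ p) / (t k - p) ≤ (1 + ε) * α k := L
            _ ≤ α (k+1) - ε * (fhat (t k) / δ) := hslopes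
            _ ≤ (g₂ q - g₂ (t k)) / (q - t k) := R
        have hglue := convexOn_glue hτpos.le hg₁ hg₂ heqτ hcross
        refine convexOn_congr' hglue (fun y => ?_)
        by_cases hy : y ≤ t k
        · simp [hy, hg₁def, hw]
        · simp only [hw, hg₂def, if_neg hy]
          by_cases hA0 : 0 ≤ A y
          · rw [max_eq_left hA0, max_eq_left (le_add_of_nonneg_right (mul_nonneg hε.le hA0))]
          · push_neg at hA0
            rw [max_eq_right hA0.le, mul_zero, add_zero, max_eq_right
              (by linarith only [mul_nonpos_of_nonneg_of_nonpos hε.le hA0.le] :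
                fhat y + ε * A y ≤ fhat y)]
      have FO := first_order n hn x fhat hfint hfpos hopt w hwint ε₀ hε₀pos hcv
      have hsumle : ∑ i, (if x i ≤ t k then (1:ℝ) else 0) ≤ ∑ i, (w (x i) / fhat (x i)) := by
        apply Finset.sum_le_sum
        intro i _
        by_cases hxi : x i ≤ t k
        · simp [hxi, hw, div_self (hfpos i).ne']
        · simp only [hw, if_neg hxi]
          exact div_nonneg (le_max_right _ _) (hfpos i).le
      have hwIoi' : IntegrableOn w (Ioi (t k)) := by
        rw [← Ioc_union_Ioi_eq_Ioi (by linarith : t k ≤ t k + δ)]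
        exact hwIoc.union hwIoi
      have hIw : (∫ y in Ici (0:ℝ), w y) = (∫ u in (0:ℝ)..(t k), fhat u) + δ * fhat (t k) / 2 := by
        have hdisj : Disjoint (Icc (0:ℝ) (t k)) (Ioi (t k)) := by
          rw [Set.disjoint_left]
          intro y hy1 hy2
          exact absurd hy1.2 (not_le.mpr hy2)
        rw [← Icc_union_Ioi_eq_Ici hτpos.le,
          MeasureTheory.setIntegral_union hdisj measurableSet_Ioi hwIcc hwIoi']
        have h1 : ∫ y in Icc (0:ℝ) (t k), w y = ∫ u in (0:ℝ)..(t k), fhat u := by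
          rw [MeasureTheory.setIntegral_congr_fun measurableSet_Icc
            (fun y hy => (by simp [hw, hy.2] : w y = fhat y)),
            MeasureTheory.integral_Icc_eq_integral_Ioc,
            ← intervalIntegral.integral_of_le hτpos.le]
        have h2 : ∫ y in Ioi (t k), w y = δ * fhat (t k) / 2 := by
          rw [← Ioc_union_Ioi_eq_Ioi (by linarith : t k ≤ t k + δ),
            MeasureTheory.setIntegral_union (Ioc_disjoint_Ioi le_rfl)
              measurableSet_Ioi hwIoc hwIoi]
          have h2c : ∫ y in Ioi (t k + δ), w y = 0 := by
            rw [MeasureTheory.setIntegral_congr_fun measurableSet_Ioi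
              (fun y hy => ?_), integral_zero]
            have hy' : t k + δ < y := hy
            have hna : ¬ y ≤ t k := by linarith
            have h2' : A y ≤ 0 := by
              rw [hA]
              exact mul_nonpos_of_nonneg_of_nonpos (div_nonneg hfτpos.le hδ.le) (by linarith)
            simp [hw, hna, max_eq_right h2']
          have h2a : ∫ y in Ioc (t k) (t k + δ), w y
              = ∫ y in (t k)..(t k + δ), fhat (t k) / δ * (t k + δ - y) := by
            rw [intervalIntegral.integral_of_le (by linarith : t k ≤ t k + δ)]
            apply MeasureTheory.setIntegral_congr_fun measurableSet_Ioc
            intro y hy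
            have h1' : ¬ y ≤ t k := not_le.mpr hy.1
            have hmax : max (A y) 0 = A y := max_eq_left (by
              rw [hA]
              exact mul_nonneg (div_nonneg hfτpos.le hδ.le) (by linarith [hy.2]))
            simp [hw, h1', hmax, hA]
            exact mul_nonneg (div_nonneg hfτpos.le hδ.le) (by linarith [hy.2])
          have h2b : ∫ y in (t k)..(t k + δ), fhat (t k) / δ * (t k + δ - y)
              = δ * fhat (t k) / 2 := by
            rw [intervalIntegral.integral_const_mul,
              intervalIntegral.integral_sub intervalIntegrable_const
                intervalIntegral.intervalIntegrable_id,
              intervalIntegral.integral_const, integral_id]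
            simp only [smul_eq_mul]
            field_simp
            ring
          rw [h2a, h2b, h2c, add_zero]
        rw [h1, h2]
      calc (n:ℝ)⁻¹ * ∑ i, (if x i ≤ t k then (1:ℝ) else 0)
          ≤ (n:ℝ)⁻¹ * ∑ i, (w (x i) / fhat (x i)) := by
            exact mul_le_mul_of_nonneg_left hsumle (by positivity)
        _ ≤ ∫ y in Ici (0:ℝ), w y := FO
        _ = (∫ u in (0:ℝ)..(t k), fhat u) + δ * fhat (t k) / 2 := hIw
    have lower : ∀ δ : ℝ, 0 < δ → δ < t k - t (k-1) → δ * (-(α 1)) ≤ fhat (t k) →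
        (∫ u in (0:ℝ)..(t k), fhat u) - δ * fhat (t k) / 2 ≤
          (n:ℝ)⁻¹ * ∑ i, (if x i ≤ t k then (1:ℝ) else 0) := by
      intro δ hδ hδ1 hδ2
      have hτδ0 : 0 ≤ t k - δ := by linarith
      have hτδτ : t k - δ < t k := by linarith
      set B : ℝ → ℝ := fun y => fhat (t k - δ) / δ * (t k - y) with hB
      set w : ℝ → ℝ := fun y => if y ≤ t k - δ then fhat y else if y ≤ t k then B y else 0
        with hw
      have hmemδ : t k - δ ∈ Icc (t (k-1)) (t k) := ⟨by linarith, by linarith⟩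
      have hfτδ : fhat (t k - δ) = α k * (t k - δ) + β k := haffL _ hmemδ
      have hfdiff : fhat (t k - δ) - fhat (t k) = -(α k) * δ := by
        rw [hfτδ, hfτk]; ring
      have hfτδpos : 0 < fhat (t k - δ) := by
        have h1 : 0 < -(α k) * δ := mul_pos (neg_pos.mpr hαkneg) hδ
        linarith only [hfdiff, h1, hfτpos]
      have hδ2' : δ * (-(α 1)) ≤ fhat (t k - δ) := by
        have h1 : 0 < -(α k) * δ := mul_pos (neg_pos.mpr hαkneg) hδ
        linarith only [hfdiff, h1, hδ2]
      have hBle : ∀ y, t k - δ ≤ y → y ≤ t k → B y ≤ fhat y := by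
        intro y hy1 hy2
        have hyIcc : y ∈ Icc (t (k-1)) (t k) := ⟨by linarith, hy2⟩
        have hfy : fhat y = α k * y + β k := haffL y hyIcc
        have hid : (α k * y + β k) * δ - (fhat (t k - δ)) * (t k - y)
            = fhat (t k) * (y - (t k - δ)) := by
          rw [hfτδ, hfτk]; ring
        have h2 : 0 ≤ fhat (t k) * (y - (t k - δ)) :=
          mul_nonneg hfτpos.le (by linarith)
        simp only [hB]
        rw [hfy, div_mul_eq_mul_div, div_le_iff₀ hδ]
        linarith only [hid, h2]
      have hBge : ∀ y, 0 ≤ y → y ≤ t k - δ → fhat y ≤ B y := by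
        intro y hy0 hy1
        rcases eq_or_lt_of_le hy1 with he | hlt
        · rw [he]
          simp only [hB]
          have he2 : fhat (t k - δ) / δ * (t k - (t k - δ)) = fhat (t k - δ) := by
            rw [sub_sub_cancel, div_mul_cancel₀ _ hδ.ne']
          rw [he2]
        · have hL := lowerLip y (t k - δ) hy0 hlt
          have hLδ := mul_le_mul_of_nonneg_right hL hδ.le
          have hs : 0 ≤ t k - δ - y := by linarith
          have h7 : (t k - δ - y) * (δ * (-(α 1))) ≤ (t k - δ - y) * fhat (t k - δ) :=
            mul_le_mul_of_nonneg_left hδ2' hs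
          simp only [hB]
          rw [div_mul_eq_mul_div, le_div_iff₀ hδ]
          nlinarith [hLδ, h7]
      have hwIcc : IntegrableOn w (Icc 0 (t k - δ)) :=
        (hfIcc le_rfl).congr_fun (fun y hy => by simp [hw, hy.2]) measurableSet_Icc
      have hcontB : Continuous B := continuous_const.mul (continuous_const.sub continuous_id)
      have hwIoc : IntegrableOn w (Ioc (t k - δ) (t k)) :=
        (hcontB.integrableOn_Icc.mono_set Ioc_subset_Icc_self).congr_fun
          (fun y hy => by simp [hw, not_le.mpr hy.1, hy.2]) measurableSet_Ioc
      have hwIoi : IntegrableOn w (Ioi (t k)) := by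
        refine (integrableOn_zero).congr_fun (fun y hy => ?_) measurableSet_Ioi
        have hy' : t k < y := hy
        have h1 : ¬ y ≤ t k - δ := by linarith
        have h2 : ¬ y ≤ t k := by linarith
        simp [hw, h1, h2]
      have hwint : IntegrableOn w (Ici 0) := by
        have hs : Ici (0:ℝ) = Icc 0 (t k - δ) ∪ (Ioc (t k - δ) (t k) ∪ Ioi (t k)) := by
          rw [Ioc_union_Ioi_eq_Ioi hτδτ.le, Icc_union_Ioi_eq_Ici hτδ0]
        rw [hs]
        exact hwIcc.union (hwIoc.union hwIoi)
      set ε₀ : ℝ := min ((α (k+1) - α k) / (1 + fhat (t k - δ) / δ)) (1/2) with hε₀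
      have hQpos : 0 < 1 + fhat (t k - δ) / δ := by positivity
      have hε₀pos : 0 < ε₀ := lt_min (div_pos (by linarith) hQpos) (by norm_num)
      have hcv : ∀ ε, 0 < ε → ε ≤ ε₀ →
          ConvexOn ℝ (Ici 0) (fun y => fhat y + ε * (-(w y))) := by
        intro ε hε hεle
        have hεhalf : ε ≤ 1/2 := hεle.trans (min_le_right _ _)
        have hslopes : α k + ε * (fhat (t k - δ) / δ) ≤ α (k+1) := by
          have h1 : ε * (fhat (t k - δ) / δ) ≤ ε₀ * (fhat (t k - δ) / δ) :=
            mul_le_mul_of_nonneg_right hεle (by positivity)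
          have h2 : ε₀ * (fhat (t k - δ) / δ) ≤
              ((α (k+1) - α k) / (1 + fhat (t k - δ) / δ)) * (fhat (t k - δ) / δ) :=
            mul_le_mul_of_nonneg_right (min_le_left _ _) (by positivity)
          have h3 : ((α (k+1) - α k) / (1 + fhat (t k - δ) / δ)) * (fhat (t k - δ) / δ)
              ≤ α (k+1) - α k := by
            rw [div_mul_eq_mul_div, div_le_iff₀ hQpos]
            have h4 : (α (k+1) - α k) * (fhat (t k - δ) / δ) ≤
                (α (k+1) - α k) * (1 + fhat (t k - δ) / δ) :=
              mul_le_mul_of_nonneg_left (by linarith only [hQpos]) (by linarith only [hkk1])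
            linarith only [h4]
          linarith only [h1, h2, h3]
        set g₁ : ℝ → ℝ := fun y => max (fhat y + ε * (-(fhat y))) (fhat y + ε * (-(B y)))
          with hg₁def
        have hg₁ : ConvexOn ℝ (Ici 0) g₁ := by
          refine ConvexOn.sup ?_ ?_
          · exact convexOn_congr' (hfconv.smul (by linarith : (0:ℝ) ≤ 1 - ε))
              (fun y => by simp only [smul_eq_mul]; ring)
          · exact hfconv.add (convexOn_affine' _ (ε * fhat (t k - δ) / δ)
              (-(ε * fhat (t k - δ) / δ * t k)) (fun y => by rw [hB]; ring))
        have hBτ : B (t k) = 0 := by rw [hB]; ring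
        have heqτ : g₁ (t k) = fhat (t k) := by
          rw [hg₁def]
          simp only [hBτ]
          have hle : fhat (t k) + ε * (-(fhat (t k))) ≤ fhat (t k) + ε * (-(0:ℝ)) := by
            nlinarith
          rw [max_eq_right hle]
          ring
        have haffg₁ : ∀ y ∈ Icc (t k - δ) (t k),
            g₁ y = (α k + ε * (fhat (t k - δ) / δ)) * y
              + (β k - ε * (fhat (t k - δ) / δ) * t k) := by
          intro y hy
          have hBy := hBle y hy.1 hy.2
          have hfy : fhat y = α k * y + β k := haffL y ⟨by linarith [hy.1], hy.2⟩
          rw [hg₁def]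
          simp only
          rw [max_eq_right (by nlinarith : fhat y + ε * (-(fhat y)) ≤ fhat y + ε * (-(B y))),
            hfy, hB]
          ring
        have hcross : ∀ p q : ℝ, 0 ≤ p → p < t k → t k < q →
            (g₁ (t k) - g₁ p) / (t k - p) ≤ (fhat q - fhat (t k)) / (q - t k) := by
          intro p q hp hpτ hτq
          have L := secant_le hg₁ hτδ0 hτδτ haffg₁ p hp hpτ
          have R := secant_ge hfconv hτpos.le hττ1 haffR q hτq
          calc (g₁ (t k) - g₁ p) / (t k - p) ≤ α k + ε * (fhat (t k - δ) / δ) := L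
            _ ≤ α (k+1) := hslopes
            _ ≤ (fhat q - fhat (t k)) / (q - t k) := R
        have hglue := convexOn_glue hτpos.le hg₁ hfconv heqτ hcross
        refine convexOn_congrOn hglue (fun y hy => ?_)
        have hy0 : (0:ℝ) ≤ y := hy
        by_cases hy1 : y ≤ t k - δ
        · have hyτ : y ≤ t k := by linarith
          have hBgey := hBge y hy0 hy1
          simp only [hw, hg₁def, if_pos hy1, if_pos hyτ]
          rw [max_eq_left (by nlinarith : fhat y + ε * (-(B y)) ≤ fhat y + ε * (-(fhat y)))]
        · by_cases hy2 : y ≤ t k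
          · have hBley := hBle y (by linarith) hy2
            simp only [hw, hg₁def, if_pos hy2, if_neg hy1]
            rw [max_eq_right (by nlinarith : fhat y + ε * (-(fhat y)) ≤ fhat y + ε * (-(B y)))]
          · simp only [hw, hg₁def, if_neg hy1, if_neg hy2]
            ring
      have FO := first_order n hn x fhat hfint hfpos hopt (fun y => -(w y)) hwint.neg
        ε₀ hε₀pos hcv
      have FO' : (∫ y in Ici (0:ℝ), w y) ≤ (n:ℝ)⁻¹ * ∑ i, (w (x i) / fhat (x i)) := by
        rw [integral_neg] at FO
        have h2 : ∑ i, (-(w (x i)) / fhat (x i)) = - ∑ i, (w (x i) / fhat (x i)) := by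
          rw [← Finset.sum_neg_distrib]
          exact Finset.sum_congr rfl fun i _ => neg_div _ _
        rw [h2] at FO
        nlinarith [FO]
      have hsumge : ∑ i, (w (x i) / fhat (x i)) ≤ ∑ i, (if x i ≤ t k then (1:ℝ) else 0) := by
        apply Finset.sum_le_sum
        intro i _
        by_cases h1 : x i ≤ t k - δ
        · have h2 : x i ≤ t k := by linarith
          simp [hw, h1, h2, div_self (hfpos i).ne']
        · by_cases h2 : x i ≤ t k
          · simp only [hw, if_neg h1, if_pos h2]
            rw [div_le_one (hfpos i)]
            exact hBle (x i) (by linarith) h2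
          · simp [hw, h1, h2]
      have hIw : (∫ y in Ici (0:ℝ), w y)
          = (∫ u in (0:ℝ)..(t k), fhat u) - δ * fhat (t k) / 2 := by
        have hdisj : Disjoint (Icc (0:ℝ) (t k - δ)) (Ioi (t k - δ)) := by
          rw [Set.disjoint_left]
          intro y hy1 hy2
          exact absurd hy1.2 (not_le.mpr hy2)
        have hwIoi' : IntegrableOn w (Ioi (t k - δ)) := by
          rw [← Ioc_union_Ioi_eq_Ioi hτδτ.le]
          exact hwIoc.union hwIoi
        rw [← Icc_union_Ioi_eq_Ici hτδ0,
          MeasureTheory.setIntegral_union hdisj measurableSet_Ioi hwIcc hwIoi']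
        have h1 : ∫ y in Icc (0:ℝ) (t k - δ), w y = ∫ u in (0:ℝ)..(t k - δ), fhat u := by
          rw [MeasureTheory.setIntegral_congr_fun measurableSet_Icc
            (fun y hy => (by simp [hw, hy.2] : w y = fhat y)),
            MeasureTheory.integral_Icc_eq_integral_Ioc,
            ← intervalIntegral.integral_of_le hτδ0]
        have h2 : ∫ y in Ioi (t k - δ), w y = fhat (t k - δ) * δ / 2 := by
          rw [← Ioc_union_Ioi_eq_Ioi hτδτ.le,
            MeasureTheory.setIntegral_union (Ioc_disjoint_Ioi le_rfl)
              measurableSet_Ioi hwIoc hwIoi]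
          have h2c : ∫ y in Ioi (t k), w y = 0 := by
            rw [MeasureTheory.setIntegral_congr_fun measurableSet_Ioi
              (fun y hy => ?_), integral_zero]
            have hy' : t k < y := hy
            have ha : ¬ y ≤ t k - δ := by linarith
            have hb : ¬ y ≤ t k := by linarith
            simp [hw, ha, hb]
          have h2a : ∫ y in Ioc (t k - δ) (t k), w y
              = ∫ y in (t k - δ)..(t k), fhat (t k - δ) / δ * (t k - y) := by
            rw [intervalIntegral.integral_of_le hτδτ.le]
            apply MeasureTheory.setIntegral_congr_fun measurableSet_Ioc
            intro y hy
            simp [hw, not_le.mpr hy.1, hy.2, hB]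
          have h2b : ∫ y in (t k - δ)..(t k), fhat (t k - δ) / δ * (t k - y)
              = fhat (t k - δ) * δ / 2 := by
            rw [intervalIntegral.integral_const_mul,
              intervalIntegral.integral_sub intervalIntegrable_const
                intervalIntegral.intervalIntegrable_id,
              intervalIntegral.integral_const, integral_id]
            simp only [smul_eq_mul]
            field_simp
            ring
          rw [h2a, h2b, h2c, add_zero]
        have h3 : (∫ u in (0:ℝ)..(t k), fhat u) = (∫ u in (0:ℝ)..(t k - δ), fhat u)
            + ∫ u in (t k - δ)..(t k), fhat u :=
          (intervalIntegral.integral_add_adjacent_intervals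
            (hfII 0 (t k - δ) le_rfl hτδ0) (hfII (t k - δ) (t k) hτδ0 hτδτ.le)).symm
        have h4 : (∫ u in (t k - δ)..(t k), fhat u)
            = α k * ((t k)^2 - (t k - δ)^2) / 2 + β k * δ := by
          have he : ∀ y ∈ Ioc (t k - δ) (t k), fhat y = α k * y + β k := fun y hy =>
            haffL y ⟨by linarith [hy.1], hy.2⟩
          have hi1 : IntervalIntegrable (fun y : ℝ => α k * y) volume (t k - δ) (t k) := by
            apply Continuous.intervalIntegrable
            exact continuous_const.mul continuous_id
          rw [intervalIntegral.integral_of_le hτδτ.le,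
            MeasureTheory.setIntegral_congr_fun measurableSet_Ioc he,
            ← intervalIntegral.integral_of_le hτδτ.le,
            intervalIntegral.integral_add hi1 intervalIntegrable_const,
            intervalIntegral.integral_const_mul, integral_id,
            intervalIntegral.integral_const]
          simp only [smul_eq_mul]
          ring
        rw [h1, h2, h3, h4]
        have h5 : α k * ((t k)^2 - (t k - δ)^2)/2 + β k * δ
            = δ * (fhat (t k) + fhat (t k - δ)) / 2 := by
          rw [hfτk, hfτδ]; ring
        rw [h5]
        ring
      calc (∫ u in (0:ℝ)..(t k), fhat u) - δ * fhat (t k) / 2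
          = ∫ y in Ici (0:ℝ), w y := hIw.symm
        _ ≤ (n:ℝ)⁻¹ * ∑ i, (w (x i) / fhat (x i)) := FO'
        _ ≤ (n:ℝ)⁻¹ * ∑ i, (if x i ≤ t k then (1:ℝ) else 0) :=
            mul_le_mul_of_nonneg_left hsumge (by positivity)
    rw [hEDF, hcard]
    have hEle : (n:ℝ)⁻¹ * ∑ i, (if x i ≤ t k then (1:ℝ) else 0)
        ≤ ∫ u in (0:ℝ)..(t k), fhat u := by
      refine le_of_forall_pos_le_add fun η hη => ?_
      set δ : ℝ := min ((t (k+1) - t k)/2) (η / fhat (t k)) with hδdef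
      have hδpos : 0 < δ := lt_min (by linarith) (by positivity)
      have h := upper δ hδpos (by
        have h0 : δ ≤ (t (k+1) - t k)/2 := min_le_left _ _
        linarith)
      have hb : δ * fhat (t k) ≤ η := by
        have h1 : δ ≤ η / fhat (t k) := min_le_right _ _
        rw [← le_div_iff₀ hfτpos]
        exact h1
      linarith
    have hFle : (∫ u in (0:ℝ)..(t k), fhat u)
        ≤ (n:ℝ)⁻¹ * ∑ i, (if x i ≤ t k then (1:ℝ) else 0) := by
      refine le_of_forall_pos_le_add fun η hη => ?_
      set δ : ℝ := min (min ((t k - t (k-1))/2) (fhat (t k)/(-(α 1)))) (η / fhat (t k))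
        with hδdef
      have hα1pos : 0 < -(α 1) := neg_pos.mpr hα1neg
      have hδpos : 0 < δ :=
        lt_min (lt_min (by linarith) (by positivity)) (by positivity)
      have hc1 : δ < t k - t (k-1) := by
        have h1 : δ ≤ (t k - t (k-1))/2 := le_trans (min_le_left _ _) (min_le_left _ _)
        linarith
      have hc2 : δ * (-(α 1)) ≤ fhat (t k) := by
        have h1 : δ ≤ fhat (t k)/(-(α 1)) := le_trans (min_le_left _ _) (min_le_right _ _)
        rw [← le_div_iff₀ hα1pos]
        exact h1
      have h := lower δ hδpos hc1 hc2
      have hb : δ * fhat (t k) ≤ η := by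
        have h1 : δ ≤ η / fhat (t k) := min_le_right _ _
        rw [← le_div_iff₀ hfτpos]
        exact h1
      linarith
    linarith
  intro k hk
  rcases Nat.eq_zero_or_pos k with hk0 | hk1
  · subst hk0
    rw [ht0, hEDF, intervalIntegral.integral_same]
    have he : (Finset.univ.filter fun i => x i ≤ (0:ℝ)) = ∅ :=
      Finset.filter_false_of_mem (fun i _ => not_le.mpr (hx i))
    rw [he]
    simp
  · rcases eq_or_lt_of_le hk with hkm | hkm
    · subst hkm
      rw [hEDF]
      have he : (Finset.univ.filter fun i => x i ≤ t k) = Finset.univ :=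
        Finset.filter_true_of_mem (fun i _ => (htmax i).le)
      rw [he, ← hIci_eq, hifone, Finset.card_univ]
      simp [inv_mul_cancel₀ hn0.ne']
    · exact middle k hk1 hkm
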